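/- If ε is symmetrically distributed about 0 conditionally on X (i.e., conditionally on X, ε and -ε have the same distribution and P(ε ≥ 0 | X) = P(ε ≤ 0 | X) = 1/2 when ε has no atom at 0, or more generally P(ε ≤ 0|X) ≥ 1/2 and P(ε ≥ 0|X) ≥ 1/2), then for every unit vector u ∈ S^d, P(uᵀ(Y - Wᵀθ₀)W ≤ 0) ≥ 1/2, i.e., (X,Y) is regression halfspace symmetric about θ₀. -/

import Mathlib

open MeasureTheory Matrix
open scoped ENNReal

lemma stmt6_aux {Ω : Type*} {m : MeasurableSpace Ω} {m0 : MeasurableSpace Ω} (hm : m ≤ m0)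
    (μ : @MeasureTheory.Measure Ω m0) [IsProbabilityMeasure μ] (S C : Set Ω)
    (hS : MeasurableSet[m0] S) (hCm : MeasurableSet[m] C)
    (hcond : ∀ᵐ ω ∂μ, (1 : ℝ) / 2 ≤ (μ[Set.indicator S (fun _ => (1 : ℝ)) | m]) ω) :
    (1 : ℝ) / 2 * (μ C).toReal ≤ (μ (S ∩ C)).toReal := by
  have hC : MeasurableSet[m0] C := hm _ hCm
  have hint : Integrable (Set.indicator S (fun _ => (1 : ℝ))) μ :=
    (integrable_const 1).indicator hS
  have e1 : ∫ ω in C, Set.indicator S (fun _ => (1 : ℝ)) ω ∂μ = (μ (S ∩ C)).toReal := by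
    rw [integral_indicator hS, Measure.restrict_restrict hS, setIntegral_const]
    simp; rfl
  have e2 : ∫ ω in C, (μ[Set.indicator S (fun _ => (1 : ℝ)) | m]) ω ∂μ
      = ∫ ω in C, Set.indicator S (fun _ => (1 : ℝ)) ω ∂μ :=
    setIntegral_condExp hm hint hCm
  have e3 : (1 : ℝ) / 2 * (μ C).toReal
      ≤ ∫ ω in C, (μ[Set.indicator S (fun _ => (1 : ℝ)) | m]) ω ∂μ := by
    have h : ∫ _ω in C, (1 : ℝ) / 2 ∂μ = (1 : ℝ) / 2 * (μ C).toReal := by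
      rw [setIntegral_const, smul_eq_mul, Measure.real]; ring
    rw [← h]
    exact integral_mono_ae (integrable_const _)
      integrable_condExp.integrableOn (ae_restrict_of_ae hcond)
  linarith [e1 ▸ e2 ▸ e3]

theorem stmt6 {d : ℕ} {Ω : Type*} [MeasurableSpace Ω] (μ : Measure Ω) [IsProbabilityMeasure μ]
    (X : Ω → Fin d → ℝ) (ε : Ω → ℝ) (Y : Ω → ℝ) (θ₀ : Fin (d + 1) → ℝ)
    (hX : Measurable X) (hε : Measurable ε)
    (W : Ω → Fin (d + 1) → ℝ) (hW : ∀ ω, W ω = Fin.cons 1 (X ω))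
    (hY : ∀ ω, Y ω = W ω ⬝ᵥ θ₀ + ε ω)
    (hneg : ∀ᵐ ω ∂μ, (1 : ℝ) / 2 ≤
      (μ[Set.indicator {ω' | ε ω' ≤ 0} (fun _ => (1 : ℝ)) |
        MeasurableSpace.comap X inferInstance]) ω)
    (hpos : ∀ᵐ ω ∂μ, (1 : ℝ) / 2 ≤
      (μ[Set.indicator {ω' | 0 ≤ ε ω'} (fun _ => (1 : ℝ)) |
        MeasurableSpace.comap X inferInstance]) ω) :
    ∀ u : Fin (d + 1) → ℝ, Real.sqrt (∑ i, u i ^ 2) = 1 →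
      1 / 2 ≤ μ {ω | u ⬝ᵥ ((Y ω - W ω ⬝ᵥ θ₀) • W ω) ≤ 0} := by
  intro u _
  have hm : MeasurableSpace.comap X inferInstance ≤ ‹MeasurableSpace Ω› := hX.comap_le
  set f : (Fin d → ℝ) → ℝ := fun v => u ⬝ᵥ Fin.cons 1 v with hf_def
  have hf : Measurable f := by
    simp only [hf_def, dotProduct]
    apply Finset.measurable_sum
    intro i _
    refine measurable_const.mul ?_
    exact Fin.cases (by simp)
      (fun j => by simpa using measurable_pi_apply j) i
  set B : Set Ω := X ⁻¹' {v | 0 ≤ f v} with hB_def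
  have hBm : MeasurableSet[MeasurableSpace.comap X inferInstance] B :=
    ⟨{v | 0 ≤ f v}, measurableSet_le measurable_const hf, rfl⟩
  have hB : MeasurableSet B := hm _ hBm
  set S₁ : Set Ω := {ω' | ε ω' ≤ 0} with hS1_def
  set S₂ : Set Ω := {ω' | 0 ≤ ε ω'} with hS2_def
  have hS₁ : MeasurableSet S₁ := measurableSet_le hε measurable_const
  have hS₂ : MeasurableSet S₂ := measurableSet_le measurable_const hε
  set A : Set Ω := {ω | u ⬝ᵥ ((Y ω - W ω ⬝ᵥ θ₀) • W ω) ≤ 0} with hA_def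
  have hA_eq : ∀ ω, (u ⬝ᵥ ((Y ω - W ω ⬝ᵥ θ₀) • W ω)) = ε ω * f (X ω) := by
    intro ω
    have h1 : Y ω - W ω ⬝ᵥ θ₀ = ε ω := by rw [hY ω]; ring
    rw [h1, dotProduct_smul, hW ω, smul_eq_mul]
  have hsub1 : S₁ ∩ B ⊆ A := by
    rintro ω ⟨h1, h2⟩
    show u ⬝ᵥ _ ≤ 0
    rw [hA_eq ω]
    exact mul_nonpos_of_nonpos_of_nonneg h1 h2
  have hsub2 : S₂ ∩ Bᶜ ⊆ A := by
    rintro ω ⟨h1, h2⟩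
    show u ⬝ᵥ _ ≤ 0
    rw [hA_eq ω]
    exact mul_nonpos_of_nonneg_of_nonpos h1 (le_of_lt (not_le.mp h2))
  have k1 := stmt6_aux hm μ S₁ B hS₁ hBm hneg
  have k2 := stmt6_aux hm μ S₂ Bᶜ hS₂ hBm.compl hpos
  have hdisj : Disjoint (S₁ ∩ B) (S₂ ∩ Bᶜ) :=
    disjoint_compl_right.mono Set.inter_subset_right Set.inter_subset_right
  have hAbig : μ (S₁ ∩ B) + μ (S₂ ∩ Bᶜ) ≤ μ A :=
    le_trans (le_of_eq (measure_union hdisj (hS₂.inter hB.compl)).symm)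
      (measure_mono (Set.union_subset hsub1 hsub2))
  have hfin : ∀ s : Set Ω, μ s ≠ ⊤ := fun s => measure_ne_top μ s
  have hsum : (μ (S₁ ∩ B)).toReal + (μ (S₂ ∩ Bᶜ)).toReal ≤ (μ A).toReal := by
    rw [← ENNReal.toReal_add (hfin _) (hfin _)]
    exact ENNReal.toReal_mono (hfin _) hAbig
  have huniv : (μ B).toReal + (μ Bᶜ).toReal = 1 := by
    rw [← ENNReal.toReal_add (hfin _) (hfin _)]
    simp [measure_add_measure_compl hB]
  have final : (1 : ℝ) / 2 ≤ (μ A).toReal := by linarith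
  rw [show (1 / 2 : ℝ≥0∞) = ENNReal.ofReal (1 / 2) by rw [ENNReal.ofReal_div_of_pos (by norm_num)]; norm_num]
  exact (ENNReal.ofReal_le_iff_le_toReal (hfin A)).mpr final
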